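/- For every parameter h ∈ [0,1] and every natural number n ≥ 1, the mean squared displacements of the lifted tent map and the lifted V map agree: ∫_0^1 (Λ_h^n(x) − x)² dx = ∫_0^1 (V_h^n(x) − x)² dx (Lebesgue integrals). Consequently, if the diffusion coefficient D_V(h) = lim_{n→∞} (1/(2n)) ∫_0^1 (V_h^n(x) − x)² dx exists, then the corresponding limit for Λ_h exists and D_Λ(h) = D_V(h). -/

import Mathlib

open Filter

/-- The lifted V map `V_h`. -/
noncomputable def liftV (h x : ℝ) : ℝ :=
  if Int.fract x < 1/2 then (⌊x⌋ : ℝ) + (-2 * Int.fract x + 1 + h)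
  else (⌊x⌋ : ℝ) + (2 * Int.fract x - 1 - h)

/-- The lifted tent map `Λ_h`. -/
noncomputable def liftTent (h x : ℝ) : ℝ :=
  if Int.fract x < 1/2 then (⌊x⌋ : ℝ) + (2 * Int.fract x + h)
  else (⌊x⌋ : ℝ) + (-2 * Int.fract x + 2 - h)

lemma conjV (h x : ℝ) (hx : ∀ m : ℤ, 2 * x ≠ (m : ℝ)) :
    liftV h x = - liftTent h (-x) := by
  have hfl' : (⌊x⌋ : ℝ) = x - Int.fract x := by
    have := Int.self_sub_fract x; linarith
  have h0 : Int.fract x ≠ 0 := by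
    intro h0
    exact hx (2 * ⌊x⌋) (by push_cast; rw [hfl'] at *; linarith)
  have h12 : Int.fract x ≠ 1/2 := by
    intro h0
    exact hx (2 * ⌊x⌋ + 1) (by push_cast; rw [hfl'] at *; linarith)
  have hneg : Int.fract (-x) = 1 - Int.fract x := Int.fract_neg h0
  have hfl : (⌊(-x)⌋ : ℝ) = -x - (1 - Int.fract x) := by
    have := Int.self_sub_fract (-x); rw [hneg] at this; linarith
  unfold liftV liftTent
  rw [hneg, hfl, hfl']
  rcases lt_or_ge (Int.fract x) (1/2) with hc | hc
  · rw [if_pos hc, if_neg (by linarith)]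
    ring
  · have hgt : 1/2 < Int.fract x := lt_of_le_of_ne hc (Ne.symm h12)
    rw [if_neg (not_lt.2 hc), if_pos (by linarith)]
    ring

lemma fiber_countable (h z : ℝ) : {x : ℝ | liftV h x = z}.Countable := by
  apply Set.Countable.mono ?_ (Set.countable_range (fun p : ℤ × Bool =>
      if p.2 then (p.1 : ℝ) + ((p.1 : ℝ) + 1 + h - z)/2
      else (p.1 : ℝ) + (z - (p.1 : ℝ) + 1 + h)/2))
  rintro x hx
  have hfl : (⌊x⌋ : ℝ) = x - Int.fract x := by
    have := Int.self_sub_fract x; linarith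
  simp only [Set.mem_setOf_eq, liftV] at hx
  rcases lt_or_ge (Int.fract x) (1/2) with hc | hc
  · refine ⟨(⌊x⌋, true), ?_⟩
    rw [if_pos hc, hfl] at hx
    simp only [if_true, hfl]
    linarith
  · refine ⟨(⌊x⌋, false), ?_⟩
    rw [if_neg (not_lt.2 hc), hfl] at hx
    simp only [Bool.false_eq_true, if_false, hfl]
    linarith

lemma preimV_countable (h : ℝ) {T : Set ℝ} (hT : T.Countable) :
    (liftV h ⁻¹' T).Countable := by
  have : liftV h ⁻¹' T = ⋃ z ∈ T, {x | liftV h x = z} := by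
    ext x; simp [Set.mem_preimage]
  rw [this]
  exact hT.biUnion fun z _ => fiber_countable h z

lemma Sk_countable (h : ℝ) : ∀ k : ℕ,
    {x : ℝ | ∃ m : ℤ, 2 * (liftV h)^[k] x = (m : ℝ)}.Countable
  | 0 => by
      apply Set.Countable.mono ?_ (Set.countable_range (fun m : ℤ => (m : ℝ)/2))
      rintro x ⟨m, hm⟩
      simp only [Function.iterate_zero, id] at hm
      exact ⟨m, by linarith⟩
  | (k+1) => by
      have he : {x : ℝ | ∃ m : ℤ, 2 * (liftV h)^[k+1] x = (m : ℝ)}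
          = liftV h ⁻¹' {x | ∃ m : ℤ, 2 * (liftV h)^[k] x = (m : ℝ)} := by
        ext x; simp [Function.iterate_succ_apply]
      rw [he]
      exact preimV_countable h (Sk_countable h k)

lemma conj_iterV (h x : ℝ) : ∀ n : ℕ,
    (∀ k < n, ∀ m : ℤ, 2 * (liftV h)^[k] x ≠ (m : ℝ)) →
    (liftV h)^[n] x = -((liftTent h)^[n] (-x))
  | 0, _ => by simp
  | (n+1), H => by
      rw [Function.iterate_succ_apply', Function.iterate_succ_apply',
        conjV h _ (H n (Nat.lt_succ_self n)),
        conj_iterV h x n (fun k hk => H k (Nat.lt_succ_of_lt hk)), neg_neg]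

lemma tent_sub_one (h x : ℝ) : liftTent h (x - 1) = liftTent h x - 1 := by
  have h1 : Int.fract (x - 1) = Int.fract x := by
    simpa using Int.fract_sub_int x 1
  have h2 : (⌊x - 1⌋ : ℝ) = (⌊x⌋ : ℝ) - 1 := by
    have := Int.floor_sub_intCast x 1
    push_cast at this ⊢
    rw [this]; push_cast; ring
  unfold liftTent
  rw [h1, h2]
  split <;> ring

lemma tent_iter_sub_one (h x : ℝ) (n : ℕ) :
    (liftTent h)^[n] (x - 1) = (liftTent h)^[n] x - 1 := by
  induction n with
  | zero => simp
  | succ n ih =>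
      rw [Function.iterate_succ_apply', Function.iterate_succ_apply', ih, tent_sub_one]

theorem stmt4 (h : ℝ) (hh : h ∈ Set.Icc (0:ℝ) 1) :
    (∀ n : ℕ, 1 ≤ n →
      (∫ x in (0:ℝ)..1, ((liftTent h)^[n] x - x)^2) =
      (∫ x in (0:ℝ)..1, ((liftV h)^[n] x - x)^2)) ∧
    (∀ D : ℝ,
      Tendsto (fun n : ℕ => (1/(2*(n:ℝ))) * ∫ x in (0:ℝ)..1, ((liftV h)^[n] x - x)^2)
        atTop (nhds D) →
      Tendsto (fun n : ℕ => (1/(2*(n:ℝ))) * ∫ x in (0:ℝ)..1, ((liftTent h)^[n] x - x)^2)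
        atTop (nhds D)) := by
  have key : ∀ n : ℕ,
      (∫ x in (0:ℝ)..1, ((liftTent h)^[n] x - x)^2) =
      (∫ x in (0:ℝ)..1, ((liftV h)^[n] x - x)^2) := by
    intro n
    have step1 : (∫ x in (0:ℝ)..1, ((liftTent h)^[n] x - x)^2)
        = ∫ x in (0:ℝ)..1, ((liftTent h)^[n] (x - 1) - (x - 1))^2 := by
      apply intervalIntegral.integral_congr
      intro x _
      dsimp only
      rw [tent_iter_sub_one]
      ring
    have step2 : (∫ x in (0:ℝ)..1, ((liftTent h)^[n] (x - 1) - (x - 1))^2)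
        = ∫ x in (-1:ℝ)..0, ((liftTent h)^[n] x - x)^2 := by
      have := intervalIntegral.integral_comp_sub_right (a := (0:ℝ)) (b := 1)
        (fun x => ((liftTent h)^[n] x - x)^2) 1
      simpa using this
    have step3 : (∫ x in (-1:ℝ)..0, ((liftTent h)^[n] x - x)^2)
        = ∫ x in (0:ℝ)..1, ((liftTent h)^[n] (-x) - (-x))^2 := by
      have := intervalIntegral.integral_comp_neg (a := (0:ℝ)) (b := 1)
        (fun x => ((liftTent h)^[n] x - x)^2)
      simpa using this.symm
    have hbad : (⋃ k ∈ Finset.range n,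
        {x : ℝ | ∃ m : ℤ, 2 * (liftV h)^[k] x = (m : ℝ)}).Countable :=
      Set.Countable.biUnion (Finset.range n).countable_toSet
        (fun k _ => Sk_countable h k)
    have hnull : MeasureTheory.volume (⋃ k ∈ Finset.range n,
        {x : ℝ | ∃ m : ℤ, 2 * (liftV h)^[k] x = (m : ℝ)}) = 0 :=
      hbad.measure_zero _
    have hae : ∀ᵐ x : ℝ, x ∉ (⋃ k ∈ Finset.range n,
        {x : ℝ | ∃ m : ℤ, 2 * (liftV h)^[k] x = (m : ℝ)}) :=
      MeasureTheory.measure_eq_zero_iff_ae_notMem.mp hnull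
    have step4 : (∫ x in (0:ℝ)..1, ((liftTent h)^[n] (-x) - (-x))^2)
        = ∫ x in (0:ℝ)..1, ((liftV h)^[n] x - x)^2 := by
      apply intervalIntegral.integral_congr_ae
      filter_upwards [hae] with x hx _
      have hcond : ∀ k < n, ∀ m : ℤ, 2 * (liftV h)^[k] x ≠ (m : ℝ) := by
        intro k hk m hm
        exact hx (Set.mem_biUnion (Finset.mem_range.mpr hk) ⟨m, hm⟩)
      have := conj_iterV h x n hcond
      rw [show (liftTent h)^[n] (-x) = -((liftV h)^[n] x) by rw [this, neg_neg]]
      ring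
    rw [step1, step2, step3, step4]
  refine ⟨fun n _ => key n, fun D hV => ?_⟩
  exact hV.congr (fun n => by rw [key n])
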